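/- For every natural number n > 144, one has (1/12) · ∑_{d ∣ n} d·φ(d)·φ(n/d) > ∑_{d ∣ n} φ(d)·φ(n/d), where φ is Euler's totient function. Equivalently, ∑_{d ∣ n} d·φ(d)·φ(n/d) > 12 · ∑_{d ∣ n} φ(d)·φ(n/d). -/

import Mathlib

theorem stmt_0 (n : ℕ) (hn : 144 < n) :
    12 * ∑ d ∈ n.divisors, Nat.totient d * Nat.totient (n / d) <
      ∑ d ∈ n.divisors, d * Nat.totient d * Nat.totient (n / d) := by
  have hn0 : 0 < n := by omega
  have hsym : ∑ d ∈ n.divisors, d * Nat.totient d * Nat.totient (n / d)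
      = ∑ d ∈ n.divisors, (n / d) * Nat.totient (n / d) * Nat.totient d := by
    rw [← Nat.sum_div_divisors n (fun d => d * Nat.totient d * Nat.totient (n / d))]
    apply Finset.sum_congr rfl
    intro d hd
    rw [Nat.div_div_self (Nat.mem_divisors.mp hd).1 hn0.ne']
  have key : 24 * ∑ d ∈ n.divisors, Nat.totient d * Nat.totient (n / d)
      < 2 * ∑ d ∈ n.divisors, d * Nat.totient d * Nat.totient (n / d) := by
    rw [two_mul]
    nth_rewrite 2 [hsym]
    rw [← Finset.sum_add_distrib, Finset.mul_sum]
    apply Finset.sum_lt_sum_of_nonempty (Nat.nonempty_divisors.mpr hn0.ne')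
    intro d hd
    obtain ⟨⟨e, he⟩, hne⟩ := Nat.mem_divisors.mp hd
    have hd0 : 0 < d := Nat.pos_of_mem_divisors hd
    have hed : n / d = e := by rw [he]; exact Nat.mul_div_cancel_left e hd0
    rw [hed]
    have he0 : 0 < e := by nlinarith
    have hφd : 0 < Nat.totient d := Nat.totient_pos.mpr hd0
    have hφe : 0 < Nat.totient e := Nat.totient_pos.mpr he0
    have h24 : 24 < d + e := by nlinarith [sq_nonneg ((d : ℤ) - e)]
    calc 24 * (Nat.totient d * Nat.totient e)
        < (d + e) * (Nat.totient d * Nat.totient e) :=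
          Nat.mul_lt_mul_of_lt_of_le h24 le_rfl (Nat.mul_pos hφd hφe)
      _ = d * Nat.totient d * Nat.totient e + e * Nat.totient e * Nat.totient d := by ring
  omega
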